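/- Let χ_0^+(p) := (1/(√2 m))(m e_∅ - i p^α e_α) in the complexified exterior algebra of Minkowski space, with p^α p_α = m². Then p^α Θ_α χ_0^+(p) = i m χ_0^+(p), where Θ_α are the single-index theta matrices. -/

import Mathlib

open Matrix

/-- Index set for the basis of the exterior algebra of Minkowski space:
subsets of `{t,x,y,z} = Fin 4`. -/
abbrev Idx := Finset (Fin 4)

/-- The Minkowski metric `η = diag(1,-1,-1,-1)` (diagonal entries, real). -/
noncomputable def etaR : Fin 4 → ℝ := ![1, -1, -1, -1]

/-- The Minkowski metric diagonal entries, as complex numbers. -/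
noncomputable def etaC : Fin 4 → ℂ := fun α => (etaR α : ℂ)

/-- Exterior multiplication `ψ ↦ e_α ∧ ψ` as a matrix on the exterior algebra,
with basis `e_S` indexed by subsets `S` (in increasing order). -/
noncomputable def wedgeE (α : Fin 4) : Matrix Idx Idx ℂ :=
  Matrix.of fun S T =>
    if α ∈ S ∧ T = S.erase α then (-1 : ℂ) ^ (S.filter (· < α)).card else 0

/-- The interior product `ι_α` (with `ι_α e_β = η_{αβ}`, extended by the graded
Leibniz rule) as a matrix on the exterior algebra. -/
noncomputable def iotaE (α : Fin 4) : Matrix Idx Idx ℂ :=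
  Matrix.of fun S T =>
    if α ∉ S ∧ T = insert α S then etaC α * (-1 : ℂ) ^ (S.filter (· < α)).card else 0

/-- The Clifford action `γ_α ψ = e_α ∧ ψ - ι_α ψ` on the exterior algebra. -/
noncomputable def gam (α : Fin 4) : Matrix Idx Idx ℂ := wedgeE α - iotaE α

/-- The extended metric `η̂` on the exterior algebra: diagonal with
`η̂_{SS} = ∏_{α ∈ S} η_{αα}`. -/
noncomputable def etahat : Matrix Idx Idx ℂ := Matrix.diagonal fun S => ∏ α ∈ S, etaC α

/-- The spinor `χ_0^+(p) = (1/(√2 m))(m e_∅ - i p^α e_α)`. -/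
noncomputable def chi0 (m : ℝ) (p : Fin 4 → ℝ) : Idx → ℂ :=
  ((Real.sqrt 2 * m : ℝ) : ℂ)⁻¹ •
    ((m : ℂ) • (Pi.single (∅ : Idx) (1 : ℂ) : Idx → ℂ) -
      Complex.I • ∑ α, (p α : ℂ) • (Pi.single ({α} : Idx) (1 : ℂ) : Idx → ℂ))

lemma gam_mulVec_empty (β : Fin 4) :
    gam β *ᵥ Pi.single (∅ : Idx) (1 : ℂ) = Pi.single ({β} : Idx) 1 := by
  funext S
  simp only [gam, Matrix.sub_mulVec, Pi.sub_apply, Matrix.mulVec_single_one, Matrix.col_apply, wedgeE, iotaE,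
    Matrix.sub_apply, Matrix.of_apply, mul_one]
  have hiota : (if β ∉ S ∧ (∅ : Idx) = insert β S
      then etaC β * (-1:ℂ) ^ (S.filter (· < β)).card else 0) = 0 :=
    if_neg (fun h => (Finset.insert_ne_empty β S) h.2.symm)
  rw [hiota]
  by_cases h : S = {β}
  · subst h
    rw [if_pos ⟨Finset.mem_singleton_self β, by simp⟩]
    simp [Finset.filter_singleton]
  · rw [if_neg, Pi.single_eq_of_ne h]
    · ring
    · rintro ⟨h1, h2⟩
      rcases (Finset.erase_eq_empty_iff S β).mp h2.symm with h3 | h3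
      · exact absurd h1 (h3 ▸ Finset.notMem_empty β)
      · exact h h3

lemma neg_one_pow_sum {a b : ℕ} (h : a + b = 1) : (-1:ℂ)^a + (-1:ℂ)^b = 0 := by
  obtain ⟨rfl, rfl⟩ | ⟨rfl, rfl⟩ : (a = 0 ∧ b = 1) ∨ (a = 1 ∧ b = 0) := by omega
  · norm_num
  · norm_num

lemma card_filter_pair : ∀ α β : Fin 4, α ≠ β →
    ((insert β {α} : Finset (Fin 4)).filter (· < β)).card
      + ((insert β {α} : Finset (Fin 4)).filter (· < α)).card = 1 := by decide

lemma wedge_cond_iff (α β : Fin 4) (h : α ≠ β) (S : Idx) :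
    (β ∈ S ∧ ({α} : Idx) = S.erase β) ↔ S = insert β {α} := by
  constructor
  · rintro ⟨h1, h2⟩
    rw [← Finset.insert_erase h1, ← h2]
  · rintro rfl
    exact ⟨Finset.mem_insert_self _ _,
      (Finset.erase_insert (by simp [h.symm])).symm⟩

lemma wedge_antisym (q : Fin 4 → ℂ) (S : Idx) (α β : Fin 4) :
    q α * q β * wedgeE β S {α} + q β * q α * wedgeE α S {β} = 0 := by
  rcases eq_or_ne α β with rfl | hne
  · have hz : wedgeE α S {α} = 0 := by
      rw [wedgeE, Matrix.of_apply, if_neg]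
      rintro ⟨h1, h2⟩
      exact Finset.notMem_erase α S (h2 ▸ Finset.mem_singleton_self α)
    rw [hz]; ring
  · rw [wedgeE, wedgeE, Matrix.of_apply, Matrix.of_apply]
    by_cases hc : S = insert β {α}
    · rw [if_pos ((wedge_cond_iff α β hne S).mpr hc),
        if_pos ((wedge_cond_iff β α hne.symm S).mpr (by rw [hc, Finset.pair_comm]))]
      have hcard := card_filter_pair α β hne
      rw [← hc] at hcard
      have := neg_one_pow_sum hcard
      calc q α * q β * (-1:ℂ) ^ (S.filter (· < β)).card
            + q β * q α * (-1:ℂ) ^ (S.filter (· < α)).card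
          = q α * q β * ((-1:ℂ) ^ (S.filter (· < β)).card
            + (-1:ℂ) ^ (S.filter (· < α)).card) := by ring
        _ = 0 := by rw [this]; ring
    · rw [if_neg (fun hh => hc ((wedge_cond_iff α β hne S).mp hh)),
        if_neg (fun hh => hc (by
          rw [(wedge_cond_iff β α hne.symm S).mp hh, Finset.pair_comm]))]
      ring

lemma iota_single (α β : Fin 4) (S : Idx) :
    iotaE β S {α} = if β = α ∧ S = ∅ then etaC α else 0 := by
  rw [iotaE, Matrix.of_apply]
  by_cases h : β = α ∧ S = ∅
  · obtain ⟨rfl, rfl⟩ := h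
    simp
  · rw [if_neg, if_neg h]
    rintro ⟨h1, h2⟩
    apply h
    have hβ : β = α := by
      have : β ∈ insert β S := Finset.mem_insert_self _ _
      rw [← h2] at this; simpa using this
    subst hβ
    refine ⟨rfl, ?_⟩
    ext x
    simp only [Finset.notMem_empty, iff_false]
    intro hx
    have hx' : x ∈ insert β S := Finset.mem_insert_of_mem hx
    rw [← h2] at hx'
    have : x = β := by simpa using hx'
    exact h1 (this ▸ hx)

lemma key (q : Fin 4 → ℂ) (S : Idx) :
    ∑ α, ∑ β, q α * q β * gam β S {α}
      = -(∑ α, etaC α * (q α * q α)) * (if S = ∅ then 1 else 0) := by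
  have hsplit : ∀ α β : Fin 4, q α * q β * gam β S {α}
      = q α * q β * wedgeE β S {α} - q α * q β * iotaE β S {α} := by
    intro α β; simp only [gam, Matrix.sub_apply]; ring
  simp only [hsplit, Finset.sum_sub_distrib]
  have hw : (∑ α, ∑ β, q α * q β * wedgeE β S {α}) = 0 := by
    have h2 : (∑ α, ∑ β, q α * q β * wedgeE β S {α})
        + (∑ α, ∑ β, q α * q β * wedgeE β S {α}) = 0 := by
      nth_rewrite 2 [Finset.sum_comm]
      rw [← Finset.sum_add_distrib]
      refine Finset.sum_eq_zero fun α _ => ?_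
      rw [← Finset.sum_add_distrib]
      exact Finset.sum_eq_zero fun β _ => wedge_antisym q S α β
    exact add_self_eq_zero.mp h2
  have hi : (∑ α, ∑ β, q α * q β * iotaE β S {α})
      = (∑ α, etaC α * (q α * q α)) * (if S = ∅ then 1 else 0) := by
    simp only [iota_single]
    by_cases hS : S = ∅
    · subst hS
      simp only [if_pos rfl, and_true, mul_one, mul_ite, mul_zero]
      rw [Finset.sum_congr rfl fun α _ => Finset.sum_ite_eq' Finset.univ α _]
      simp only [Finset.mem_univ, if_pos]
      exact Finset.sum_congr rfl fun α _ => by ring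
    · simp [hS]
  rw [hw, hi]; ring

lemma keyvec (q : Fin 4 → ℂ) :
    ∑ α, ∑ β, (q α * q β) • (gam β *ᵥ Pi.single ({α} : Idx) (1:ℂ))
      = (-(∑ α, etaC α * (q α * q α))) • (Pi.single (∅ : Idx) (1:ℂ) : Idx → ℂ) := by
  funext S
  simp only [Finset.sum_apply, Pi.smul_apply, Matrix.mulVec_single, mul_one, smul_eq_mul,
    Pi.single_apply]
  simpa using key q S

/-- If `p^α p_α = m²`, then `p^α Θ_α χ_0^+(p) = i m χ_0^+(p)`, where the `Θ_α`
are the single-index theta matrices (the operators commuting with all `γ`'s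
and sending `e_∅` to `e_α`). -/
theorem theta_p_chi0 (m : ℝ) (hm : 0 < m) (p : Fin 4 → ℝ)
    (hp : ∑ α, etaR α * p α * p α = m ^ 2)
    (Th : Fin 4 → Matrix Idx Idx ℂ)
    (hcomm : ∀ α ρ, Th α * gam ρ = gam ρ * Th α)
    (h0 : ∀ α, Th α *ᵥ Pi.single (∅ : Idx) (1 : ℂ) = Pi.single ({α} : Idx) (1 : ℂ)) :
    ∑ α, (p α : ℂ) • (Th α *ᵥ chi0 m p) = (Complex.I * (m : ℂ)) • chi0 m p := by
  have hTh : ∀ α β : Fin 4, Th α *ᵥ (Pi.single ({β} : Idx) (1:ℂ))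
      = gam β *ᵥ Pi.single ({α} : Idx) 1 := by
    intro α β
    rw [← gam_mulVec_empty β, Matrix.mulVec_mulVec, hcomm, ← Matrix.mulVec_mulVec, h0]
  have hq : ∑ α, etaC α * ((p α : ℂ) * (p α : ℂ)) = (m:ℂ)^2 := by
    have h : ((∑ α, etaR α * p α * p α : ℝ) : ℂ) = (((m:ℝ)^2 : ℝ) : ℂ) := by rw [hp]
    push_cast at h
    rw [← h]
    exact Finset.sum_congr rfl fun α _ => by rw [etaC]; ring
  have hact : ∀ α, Th α *ᵥ chi0 m p = ((Real.sqrt 2 * m : ℝ) : ℂ)⁻¹ •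
      ((m:ℂ) • (Pi.single ({α} : Idx) (1:ℂ) : Idx → ℂ)
        - Complex.I • ∑ β, (p β : ℂ) • (gam β *ᵥ Pi.single ({α} : Idx) (1:ℂ))) := by
    intro α
    rw [chi0, Matrix.mulVec_smul, Matrix.mulVec_sub, Matrix.mulVec_smul, h0,
      Matrix.mulVec_smul]
    have hs : Th α *ᵥ ∑ β, (p β : ℂ) • (Pi.single ({β} : Idx) (1:ℂ) : Idx → ℂ)
        = ∑ β, (p β : ℂ) • (gam β *ᵥ Pi.single ({α} : Idx) (1:ℂ)) := by
      have h2 := map_sum (Matrix.mulVecLin (Th α))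
        (fun β => (p β : ℂ) • (Pi.single ({β} : Idx) (1:ℂ) : Idx → ℂ)) Finset.univ
      simp only [Matrix.mulVecLin_apply] at h2
      rw [h2]
      exact Finset.sum_congr rfl fun β _ => by rw [Matrix.mulVec_smul, hTh]
    rw [hs]
  funext S
  simp only [hact]
  simp only [chi0, Finset.sum_apply, Pi.smul_apply, Pi.sub_apply, smul_eq_mul,
    Matrix.mulVec_single_one, Matrix.col_apply, mul_one, Pi.single_apply]
  have hK : ∑ α, (p α : ℂ) * ∑ β, (p β : ℂ) * gam β S {α}
      = -((m:ℂ)^2) * (if S = ∅ then 1 else 0) := by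
    rw [← hq, ← key (fun α => (p α : ℂ)) S]
    exact Finset.sum_congr rfl fun α _ => by
      rw [Finset.mul_sum]
      exact Finset.sum_congr rfl fun β _ => by ring
  have expand : (∑ x : Fin 4, (p x : ℂ) *
      (((Real.sqrt 2 * m : ℝ) : ℂ)⁻¹ * (((m:ℂ) * if S = {x} then 1 else 0)
        - Complex.I * ∑ β, (p β : ℂ) * gam β S {x})))
      = ((Real.sqrt 2 * m : ℝ) : ℂ)⁻¹ * (m:ℂ)
          * (∑ x : Fin 4, (p x : ℂ) * if S = {x} then 1 else 0)
        - ((Real.sqrt 2 * m : ℝ) : ℂ)⁻¹ * Complex.I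
          * (∑ x : Fin 4, (p x : ℂ) * ∑ β, (p β : ℂ) * gam β S {x}) := by
    rw [Finset.mul_sum, Finset.mul_sum, ← Finset.sum_sub_distrib]
    exact Finset.sum_congr rfl fun x _ => by ring
  rw [expand, hK]
  have hI := Complex.I_mul_I
  linear_combination ((m:ℂ) * ((Real.sqrt 2 * m : ℝ) : ℂ)⁻¹
    * ∑ x : Fin 4, (p x : ℂ) * if S = {x} then 1 else 0) * hI
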